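/- Let A₀ ∈ ℝ^{r×r} be stable, Metzler, and irreducible, let μ₁ < 0 be its real eigenvalue dominating the real parts of all other eigenvalues, and let v₁, w₁ ∈ ℝ^r be entrywise positive vectors with A₀ v₁ = μ₁ v₁, w₁ᵀ A₀ = μ₁ w₁ᵀ, and w₁ᵀ v₁ = 1. Let ε > 0 satisfy μ₁ + ε ≤ 0, set Ā := A₀ − (μ₁ + ε) v₁ w₁ᵀ, and let γ > 0 satisfy −γ I_r ≤ A₀ entrywise. Then: (i) every matrix A ∈ ℝ^{r×r} with −γ I_r ≤ A ≤ Ā (entrywise) is Metzler and every complex eigenvalue λ of A satisfies Re(λ) ≤ −ε, so in particular A is stable; and (ii) A₀ itself satisfies −γ I_r ≤ A₀ ≤ Ā. -/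

import Mathlib

open Matrix

/-- A square real matrix is stable if every eigenvalue (as a complex matrix)
has negative real part. -/
def IsStable {r : ℕ} (A : Matrix (Fin r) (Fin r) ℝ) : Prop :=
  ∀ μ ∈ spectrum ℂ (A.map Complex.ofReal), μ.re < 0

/-- A square real matrix is Metzler if every off-diagonal entry is nonnegative. -/
def IsMetzler {r : ℕ} (A : Matrix (Fin r) (Fin r) ℝ) : Prop :=
  ∀ i j, i ≠ j → 0 ≤ A i j

/-- A square real matrix is irreducible if the directed graph with an edge
from `i` to `j` whenever `i ≠ j` and `A i j ≠ 0` is strongly connected. -/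
def IsIrreducibleMatrix {r : ℕ} (A : Matrix (Fin r) (Fin r) ℝ) : Prop :=
  ∀ i j : Fin r, Relation.ReflTransGen (fun a b => a ≠ b ∧ A a b ≠ 0) i j

/-- Entrywise order on real matrices. -/
def entryLE {m n : ℕ} (A B : Matrix (Fin m) (Fin n) ℝ) : Prop :=
  ∀ i j, A i j ≤ B i j

lemma exists_eigenvector_of_mem_spectrum {n : ℕ} (M : Matrix (Fin n) (Fin n) ℂ) {μ : ℂ}
    (h : μ ∈ spectrum ℂ M) : ∃ x : Fin n → ℂ, x ≠ 0 ∧ M.mulVec x = μ • x := by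
  rw [spectrum.mem_iff] at h
  have hdet : (algebraMap ℂ (Matrix (Fin n) (Fin n) ℂ) μ - M).det = 0 := by
    by_contra hne
    exact h ((Matrix.isUnit_iff_isUnit_det _).mpr (isUnit_iff_ne_zero.mpr hne))
  obtain ⟨x, hx0, hx⟩ := (Matrix.exists_mulVec_eq_zero_iff).mpr hdet
  refine ⟨x, hx0, ?_⟩
  rw [Algebra.algebraMap_eq_smul_one, Matrix.sub_mulVec, Matrix.smul_mulVec,
    Matrix.one_mulVec, sub_eq_zero] at hx
  exact hx.symm

lemma metzler_row_bound {r : ℕ} (A : Matrix (Fin r) (Fin r) ℝ) (hA : IsMetzler A)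
    (lam : ℂ) (x : Fin r → ℂ) (hx : (A.map Complex.ofReal).mulVec x = lam • x) (i : Fin r) :
    lam.re * ‖x i‖ ≤ ∑ j, A i j * ‖x j‖ := by
  have heq : ∑ j, (A i j : ℂ) * x j = lam * x i := by
    have := congrFun hx i
    simpa [Matrix.mulVec, Matrix.map, dotProduct] using this
  have h2 := Finset.add_sum_erase Finset.univ (fun j => (A i j : ℂ) * x j) (Finset.mem_univ i)
  have hsplit : (lam - (A i i : ℂ)) * x i = ∑ j ∈ Finset.univ.erase i, (A i j : ℂ) * x j := by
    linear_combination -heq - h2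
  have habs : (lam.re - A i i) * ‖x i‖
      ≤ ∑ j ∈ Finset.univ.erase i, A i j * ‖x j‖ := by
    calc (lam.re - A i i) * ‖x i‖
        ≤ ‖lam - (A i i : ℂ)‖ * ‖x i‖ := by
          have h1 : (lam - (A i i : ℂ)).re ≤ ‖lam - (A i i : ℂ)‖ :=
            Complex.re_le_norm _
          have h1' : lam.re - A i i ≤ ‖lam - (A i i : ℂ)‖ := by
            simpa using h1
          exact mul_le_mul_of_nonneg_right h1' (norm_nonneg _)
      _ = ‖(lam - (A i i : ℂ)) * x i‖ := (norm_mul _ _).symm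
      _ = ‖∑ j ∈ Finset.univ.erase i, (A i j : ℂ) * x j‖ := by rw [hsplit]
      _ ≤ ∑ j ∈ Finset.univ.erase i, ‖(A i j : ℂ) * x j‖ :=
          norm_sum_le _ _
      _ = ∑ j ∈ Finset.univ.erase i, A i j * ‖x j‖ := by
          refine Finset.sum_congr rfl fun j hj => ?_
          have hji : j ≠ i := Finset.ne_of_mem_erase hj
          rw [norm_mul, Complex.norm_real, Real.norm_eq_abs, abs_of_nonneg (hA i j (Ne.symm hji))]
  have h3 := Finset.add_sum_erase Finset.univ (fun j => A i j * ‖x j‖)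
    (Finset.mem_univ i)
  rw [sub_mul] at habs
  linarith

/-- with `Ā := A₀ − (μ₁ + ε) v₁ w₁ᵀ`, every matrix `A` with
`−γ I ≤ A ≤ Ā` entrywise is Metzler and all its eigenvalues have real part
at most `−ε` (so `A` is stable); moreover `−γ I ≤ A₀ ≤ Ā`. -/
theorem stable_metzler_box {r : ℕ} (A₀ : Matrix (Fin r) (Fin r) ℝ)
    (hstab : IsStable A₀) (hmet : IsMetzler A₀) (hirr : IsIrreducibleMatrix A₀)
    (μ₁ : ℝ) (hμ₁neg : μ₁ < 0)
    (hμ₁eig : (μ₁ : ℂ) ∈ spectrum ℂ (A₀.map Complex.ofReal))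
    (hdom : ∀ μ ∈ spectrum ℂ (A₀.map Complex.ofReal), μ ≠ (μ₁ : ℂ) → μ.re ≤ μ₁)
    (v₁ w₁ : Fin r → ℝ) (hv₁ : ∀ i, 0 < v₁ i) (hw₁ : ∀ i, 0 < w₁ i)
    (hveig : A₀.mulVec v₁ = μ₁ • v₁) (hweig : Matrix.vecMul w₁ A₀ = μ₁ • w₁)
    (hnorm : w₁ ⬝ᵥ v₁ = 1)
    (ε : ℝ) (hε : 0 < ε) (hμε : μ₁ + ε ≤ 0)
    (γ : ℝ) (hγ : 0 < γ) (hγA₀ : entryLE ((-γ) • (1 : Matrix (Fin r) (Fin r) ℝ)) A₀)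
    (Abar : Matrix (Fin r) (Fin r) ℝ)
    (hAbar : Abar = A₀ - (μ₁ + ε) • Matrix.vecMulVec v₁ w₁) :
    (∀ A : Matrix (Fin r) (Fin r) ℝ,
      entryLE ((-γ) • (1 : Matrix (Fin r) (Fin r) ℝ)) A → entryLE A Abar →
        IsMetzler A ∧
        (∀ lam ∈ spectrum ℂ (A.map Complex.ofReal), lam.re ≤ -ε) ∧
        IsStable A) ∧
    entryLE ((-γ) • (1 : Matrix (Fin r) (Fin r) ℝ)) A₀ ∧ entryLE A₀ Abar := by
  -- Abar entries
  have hAbar_entry : ∀ i j, Abar i j = A₀ i j - (μ₁ + ε) * (v₁ i * w₁ j) := by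
    intro i j
    simp [hAbar, Matrix.sub_apply, Matrix.smul_apply, Matrix.vecMulVec_apply]
  -- A₀ ≤ Abar
  have hA0le : entryLE A₀ Abar := by
    intro i j
    rw [hAbar_entry i j]
    nlinarith [mul_pos (hv₁ i) (hw₁ j)]
  -- left eigenvector relation for Abar
  have hweig' : ∀ j, ∑ i, w₁ i * A₀ i j = μ₁ * w₁ j := by
    intro j
    have := congrFun hweig j
    simpa [Matrix.vecMul, dotProduct] using this
  have hnorm' : ∑ i, w₁ i * v₁ i = 1 := by simpa [dotProduct] using hnorm
  have hwAbar : ∀ j, ∑ i, w₁ i * Abar i j = -ε * w₁ j := by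
    intro j
    have : ∑ i, w₁ i * Abar i j
        = ∑ i, (w₁ i * A₀ i j - (μ₁ + ε) * w₁ j * (w₁ i * v₁ i)) := by
      refine Finset.sum_congr rfl fun i _ => ?_
      rw [hAbar_entry i j]; ring
    rw [this, Finset.sum_sub_distrib, ← Finset.mul_sum, hnorm', hweig']
    ring
  refine ⟨?_, hγA₀, hA0le⟩
  intro A hlo hhi
  -- A is Metzler
  have hAmet : IsMetzler A := by
    intro i j hij
    have := hlo i j
    simpa [Matrix.smul_apply, Matrix.one_apply, hij] using this
  have hbound : ∀ lam ∈ spectrum ℂ (A.map Complex.ofReal), lam.re ≤ -ε := by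
    intro lam hlam
    obtain ⟨x, hx0, hx⟩ := exists_eigenvector_of_mem_spectrum _ hlam
    set y : Fin r → ℝ := fun i => ‖x i‖ with hy
    have hynn : ∀ i, 0 ≤ y i := fun i => norm_nonneg _
    have hrow : ∀ i, lam.re * y i ≤ ∑ j, A i j * y j := fun i =>
      metzler_row_bound A hAmet lam x hx i
    -- positivity of S = ∑ w y
    obtain ⟨i₀, hi₀⟩ : ∃ i, x i ≠ 0 := by
      by_contra h
      push_neg at h
      exact hx0 (funext fun i => h i)
    have hSpos : 0 < ∑ i, w₁ i * y i := by
      have hterm : 0 < w₁ i₀ * y i₀ :=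
        mul_pos (hw₁ i₀) (by simpa [hy] using norm_pos_iff.mpr hi₀)
      have : w₁ i₀ * y i₀ ≤ ∑ i, w₁ i * y i :=
        Finset.single_le_sum (fun i _ => mul_nonneg (hw₁ i).le (hynn i)) (Finset.mem_univ i₀)
      linarith
    -- chain of inequalities
    have key : lam.re * (∑ i, w₁ i * y i) ≤ -ε * (∑ i, w₁ i * y i) := by
      calc lam.re * (∑ i, w₁ i * y i) = ∑ i, w₁ i * (lam.re * y i) := by
            rw [Finset.mul_sum]; exact Finset.sum_congr rfl fun i _ => by ring
        _ ≤ ∑ i, w₁ i * (∑ j, A i j * y j) := by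
            refine Finset.sum_le_sum fun i _ => ?_
            exact mul_le_mul_of_nonneg_left (hrow i) (hw₁ i).le
        _ ≤ ∑ i, w₁ i * (∑ j, Abar i j * y j) := by
            refine Finset.sum_le_sum fun i _ => ?_
            refine mul_le_mul_of_nonneg_left ?_ (hw₁ i).le
            exact Finset.sum_le_sum fun j _ =>
              mul_le_mul_of_nonneg_right (hhi i j) (hynn j)
        _ = ∑ j, (∑ i, w₁ i * Abar i j) * y j := by
            simp_rw [Finset.mul_sum, Finset.sum_mul]
            rw [Finset.sum_comm]
            exact Finset.sum_congr rfl fun j _ => Finset.sum_congr rfl fun i _ => by ring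
        _ = ∑ j, -ε * (w₁ j * y j) := by
            refine Finset.sum_congr rfl fun j _ => ?_
            rw [hwAbar j]; ring
        _ = -ε * (∑ i, w₁ i * y i) := by rw [Finset.mul_sum]
    exact le_of_mul_le_mul_right key hSpos
  exact ⟨hAmet, hbound, fun lam hlam => lt_of_le_of_lt (hbound lam hlam) (by linarith)⟩
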